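/- For the linear interpolation ρ_i = (1 − i/k)ρ_0 + (i/k)ρ', i = 0,...,k, between full-rank states ρ_0 and ρ' on C^r, the symmetrized sum of successive relative entropies telescopes: Σ_{i=1}^k [D(ρ_{i−1}‖ρ_i) + D(ρ_i‖ρ_{i−1})] = (1/k)·[D(ρ_0‖ρ') + D(ρ'‖ρ_0)]. In particular Σ_{i=1}^k D(ρ_{i−1}‖ρ_i) ≤ (1/k)[D(ρ_0‖ρ') + D(ρ'‖ρ_0)] → 0 as k → ∞. -/

import Mathlib

open scoped Kronecker ComplexOrder
open Matrix

noncomputable def matfun {n : Type*} [Fintype n] [DecidableEq n] (f : ℝ → ℝ)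
    (A : Matrix n n ℂ) : Matrix n n ℂ :=
  if h : A.IsHermitian then
    (h.eigenvectorUnitary : Matrix n n ℂ) * Matrix.diagonal (fun i => (f (h.eigenvalues i) : ℂ)) *
      (star (h.eigenvectorUnitary : Matrix n n ℂ))
  else 0

noncomputable def mlog {n : Type*} [Fintype n] [DecidableEq n] (A : Matrix n n ℂ) : Matrix n n ℂ :=
  matfun Real.log A

noncomputable def mexp {n : Type*} [Fintype n] [DecidableEq n] (β : ℝ) (H : Matrix n n ℂ) : Matrix n n ℂ :=
  matfun (fun x => Real.exp (-β * x)) H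

noncomputable def gibbs {n : Type*} [Fintype n] [DecidableEq n] (β : ℝ) (H : Matrix n n ℂ) : Matrix n n ℂ :=
  ((mexp β H).trace)⁻¹ • mexp β H

noncomputable def entropy {n : Type*} [Fintype n] [DecidableEq n] (ρ : Matrix n n ℂ) : ℝ :=
  -((ρ * mlog ρ).trace).re

noncomputable def relEnt {n : Type*} [Fintype n] [DecidableEq n] (σ ρ : Matrix n n ℂ) : ℝ :=
  ((σ * (mlog σ - mlog ρ)).trace).re

def IsState {n : Type*} [Fintype n] (ρ : Matrix n n ℂ) : Prop := ρ.PosSemidef ∧ ρ.trace = 1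

noncomputable def trR {a b : Type*} [Fintype a] [Fintype b]
    (ρ : Matrix (a × b) (a × b) ℂ) : Matrix a a ℂ :=
  Matrix.of fun i j => ∑ k, ρ (i, k) (j, k)

noncomputable def trL {a b : Type*} [Fintype a] [Fintype b]
    (ρ : Matrix (a × b) (a × b) ℂ) : Matrix b b ℂ :=
  Matrix.of fun i j => ∑ k, ρ (k, i) (k, j)

noncomputable def mutInfo {a b : Type*} [Fintype a] [Fintype b] [DecidableEq a] [DecidableEq b]
    (ρ : Matrix (a × b) (a × b) ℂ) : ℝ :=
  entropy (trR ρ) + entropy (trL ρ) - entropy ρ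



section Klein
variable {n : Type*} [Fintype n] [DecidableEq n]


lemma mlog_eq {A : Matrix n n ℂ} (hA : A.IsHermitian) :
    mlog A = (hA.eigenvectorUnitary : Matrix n n ℂ) *
      Matrix.diagonal (fun i => (Real.log (hA.eigenvalues i) : ℂ)) *
      (star (hA.eigenvectorUnitary : Matrix n n ℂ)) := by
  rw [mlog, matfun, dif_pos hA]

lemma trace_conj_diag (U : Matrix.unitaryGroup n ℂ) (d : n → ℂ) :
    ((U : Matrix n n ℂ) * diagonal d * star (U : Matrix n n ℂ)).trace = ∑ i, d i := by
  rw [trace_mul_cycle, UnitaryGroup.star_mul_self, one_mul, trace_diagonal]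

lemma trace_conj_mul_conj_same (U : Matrix.unitaryGroup n ℂ) (d e : n → ℂ) :
    ((U : Matrix n n ℂ) * diagonal d * star (U : Matrix n n ℂ) *
      ((U : Matrix n n ℂ) * diagonal e * star (U : Matrix n n ℂ))).trace = ∑ i, d i * e i := by
  have h1 : star (U : Matrix n n ℂ) * (U : Matrix n n ℂ) = 1 :=
    Matrix.UnitaryGroup.star_mul_self U
  calc ((U : Matrix n n ℂ) * diagonal d * star (U : Matrix n n ℂ) *
      ((U : Matrix n n ℂ) * diagonal e * star (U : Matrix n n ℂ))).trace
      = ((U : Matrix n n ℂ) * (diagonal d * diagonal e) * star (U : Matrix n n ℂ)).trace := by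
        rw [mul_assoc, mul_assoc, mul_assoc, ← mul_assoc (star (U:Matrix n n ℂ)), h1, one_mul,
          ← mul_assoc, ← mul_assoc, mul_assoc _ (diagonal d)]
    _ = ∑ i, d i * e i := by
        rw [diagonal_mul_diagonal, trace_conj_diag]

lemma trace_conj_mul_conj (U V : Matrix.unitaryGroup n ℂ) (d e : n → ℂ) :
    ((U : Matrix n n ℂ) * diagonal d * star (U : Matrix n n ℂ) *
      ((V : Matrix n n ℂ) * diagonal e * star (V : Matrix n n ℂ))).trace
    = ∑ i, ∑ j, d i * e j *
        ((‖(star (V : Matrix n n ℂ) * (U : Matrix n n ℂ)) j i‖ : ℂ))^2 := by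
  set M : Matrix n n ℂ := star (V : Matrix n n ℂ) * (U : Matrix n n ℂ) with hM
  have key : ((U : Matrix n n ℂ) * diagonal d * star (U : Matrix n n ℂ) *
      ((V : Matrix n n ℂ) * diagonal e * star (V : Matrix n n ℂ))).trace
      = (diagonal d * (star M * (diagonal e * M))).trace := by
    have h1 : ((U : Matrix n n ℂ) * diagonal d * star (U : Matrix n n ℂ) *
      ((V : Matrix n n ℂ) * diagonal e * star (V : Matrix n n ℂ)))
      = (U : Matrix n n ℂ) * (diagonal d * (star (U:Matrix n n ℂ) * ((V : Matrix n n ℂ) *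
          (diagonal e * star (V : Matrix n n ℂ))))) := by
      simp only [Matrix.mul_assoc]
    rw [h1, trace_mul_comm]
    congr 1
    simp only [hM, Matrix.star_mul, star_star, Matrix.mul_assoc]
  rw [key, Matrix.trace]
  refine Finset.sum_congr rfl fun i _ => ?_
  rw [Matrix.diag, Matrix.diagonal_mul, Matrix.mul_apply, Finset.mul_sum]
  refine Finset.sum_congr rfl fun j _ => ?_
  rw [Matrix.diagonal_mul]
  have hstar : (star M) i j = starRingEnd ℂ (M j i) := rfl
  rw [hstar]
  have : starRingEnd ℂ (M j i) * (e j * M j i) = e j * (M j i * starRingEnd ℂ (M j i)) := by ring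
  rw [this, Complex.mul_conj']
  ring

lemma klein {σ ρ : Matrix n n ℂ} (hσ : σ.PosDef) (hρ : ρ.PosDef)
    (tσ : σ.trace = 1) (tρ : ρ.trace = 1) : 0 ≤ relEnt σ ρ := by
  obtain ⟨hA, -⟩ := id hσ
  obtain ⟨hB, -⟩ := id hρ
  set U := hA.eigenvectorUnitary with hU
  set V := hB.eigenvectorUnitary with hV
  set p := hA.eigenvalues with hp
  set q := hB.eigenvalues with hq
  set M : Matrix n n ℂ := star (V : Matrix n n ℂ) * (U : Matrix n n ℂ) with hM
  set c : n → n → ℝ := fun i j => ‖M j i‖^2 with hc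
  have hMem : M ∈ Matrix.unitaryGroup n ℂ := by
    exact mul_mem (Unitary.star_mem V.2) U.2
  have hMsM : star M * M = 1 := (Matrix.mem_unitaryGroup_iff').mp hMem
  have hMMs : M * star M = 1 := (Matrix.mem_unitaryGroup_iff).mp hMem
  have rowsum : ∀ i, ∑ j, c i j = 1 := by
    intro i
    have h1 : (star M * M) i i = 1 := by rw [hMsM, Matrix.one_apply_eq]
    rw [Matrix.mul_apply] at h1
    have h2 : ∀ j, (star M) i j * M j i = ((‖M j i‖^2 : ℝ) : ℂ) := by
      intro j
      have : (star M) i j = starRingEnd ℂ (M j i) := rfl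
      rw [this, mul_comm, Complex.mul_conj']
      push_cast; ring
    rw [Finset.sum_congr rfl fun j _ => h2 j] at h1
    exact_mod_cast h1
  have colsum : ∀ j, ∑ i, c i j = 1 := by
    intro j
    have h1 : (M * star M) j j = 1 := by rw [hMMs, Matrix.one_apply_eq]
    rw [Matrix.mul_apply] at h1
    have h2 : ∀ i, M j i * (star M) i j = ((‖M j i‖^2 : ℝ) : ℂ) := by
      intro i
      have : (star M) i j = starRingEnd ℂ (M j i) := rfl
      rw [this, Complex.mul_conj']
      push_cast; ring
    rw [Finset.sum_congr rfl fun i _ => h2 i] at h1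
    exact_mod_cast h1
  have hppos : ∀ i, 0 < p i := fun i => hσ.eigenvalues_pos i
  have hqpos : ∀ j, 0 < q j := fun j => hρ.eigenvalues_pos j
  have specA : σ = (U : Matrix n n ℂ) * diagonal (fun i => (p i : ℂ)) * star (U : Matrix n n ℂ) :=
    hA.spectral_theorem
  have specB : ρ = (V : Matrix n n ℂ) * diagonal (fun i => (q i : ℂ)) * star (V : Matrix n n ℂ) :=
    hB.spectral_theorem
  have sump : ∑ i, p i = 1 := by
    have h1 : σ.trace = ∑ i, (p i : ℂ) := by rw [specA] ; exact trace_conj_diag U _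
    rw [tσ] at h1
    exact_mod_cast h1.symm
  have sumq : ∑ j, q j = 1 := by
    have h1 : ρ.trace = ∑ i, (q i : ℂ) := by rw [specB] ; exact trace_conj_diag V _
    rw [tρ] at h1
    exact_mod_cast h1.symm
  have t1 : (σ * mlog σ).trace = ((∑ i, p i * Real.log (p i) : ℝ) : ℂ) := by
    rw [mlog_eq hA]
    nth_rewrite 1 [specA]
    rw [trace_conj_mul_conj_same]
    push_cast
    rfl
  have t2 : (σ * mlog ρ).trace = ((∑ i, ∑ j, p i * Real.log (q j) * c i j : ℝ) : ℂ) := by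
    rw [mlog_eq hB]
    nth_rewrite 1 [specA]
    rw [trace_conj_mul_conj]
    simp only [hc]
    push_cast
    rfl
  have hre : relEnt σ ρ = (∑ i, p i * Real.log (p i)) - ∑ i, ∑ j, p i * Real.log (q j) * c i j := by
    rw [relEnt, mul_sub, trace_sub, t1, t2, ← Complex.ofReal_sub, Complex.ofReal_re]
  rw [hre]
  have expand : (∑ i, p i * Real.log (p i))
      = ∑ i, ∑ j, c i j * (p i * Real.log (p i)) := by
    refine Finset.sum_congr rfl fun i _ => ?_
    rw [← Finset.sum_mul, rowsum i, one_mul]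
  rw [expand, ← Finset.sum_sub_distrib]
  have step : ∀ i ∈ Finset.univ, ∀ j ∈ (Finset.univ : Finset n),
      c i j * (p i - q j) ≤ c i j * (p i * Real.log (p i)) - p i * Real.log (q j) * c i j := by
    intro i _ j _
    have hcnn : 0 ≤ c i j := sq_nonneg _
    have hlog : Real.log (q j) - Real.log (p i) ≤ q j / p i - 1 := by
      have := Real.log_le_sub_one_of_pos (div_pos (hqpos j) (hppos i))
      rwa [Real.log_div (hqpos j).ne' (hppos i).ne'] at this
    have key : p i - q j ≤ p i * Real.log (p i) - p i * Real.log (q j) := by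
      have hp' := hppos i
      have h2 : p i * (Real.log (q j) - Real.log (p i)) ≤ p i * (q j / p i - 1) :=
        mul_le_mul_of_nonneg_left hlog hp'.le
      have h3 : p i * (q j / p i - 1) = q j - p i := by field_simp
      nlinarith
    nlinarith [mul_le_mul_of_nonneg_left key hcnn]
  have lower : ∑ i, ∑ j, c i j * (p i - q j)
      ≤ ∑ i, ∑ j, (c i j * (p i * Real.log (p i)) - p i * Real.log (q j) * c i j) := by
    refine Finset.sum_le_sum fun i hi => ?_
    exact Finset.sum_le_sum (step i hi)
  have zero_eq : ∑ i, ∑ j, c i j * (p i - q j) = 0 := by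
    have e1 : ∑ i, ∑ j, c i j * p i = 1 := by
      calc ∑ i, ∑ j, c i j * p i = ∑ i, (∑ j, c i j) * p i := by
            refine Finset.sum_congr rfl fun i _ => ?_ ; rw [Finset.sum_mul]
        _ = ∑ i, p i := by simp [rowsum]
        _ = 1 := sump
    have e2 : ∑ i, ∑ j, c i j * q j = 1 := by
      rw [Finset.sum_comm]
      calc ∑ j, ∑ i, c i j * q j = ∑ j, (∑ i, c i j) * q j := by
            refine Finset.sum_congr rfl fun j _ => ?_ ; rw [Finset.sum_mul]
        _ = ∑ j, q j := by simp [colsum]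
        _ = 1 := sumq
    have : ∑ i, ∑ j, c i j * (p i - q j)
        = (∑ i, ∑ j, c i j * p i) - ∑ i, ∑ j, c i j * q j := by
      rw [← Finset.sum_sub_distrib]
      refine Finset.sum_congr rfl fun i _ => ?_
      rw [← Finset.sum_sub_distrib]
      refine Finset.sum_congr rfl fun j _ => ?_
      ring
    rw [this, e1, e2, sub_self]
  calc (0:ℝ) = ∑ i, ∑ j, c i j * (p i - q j) := zero_eq.symm
    _ ≤ _ := by
        refine lower.trans_eq ?_
        refine Finset.sum_congr rfl fun i _ => ?_
        rw [Finset.sum_sub_distrib]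

end Klein

section Aux
variable {n : Type*} [Fintype n] [DecidableEq n]

lemma mlog_eq' {A : Matrix n n ℂ} (hA : A.IsHermitian) :
    mlog A = (hA.eigenvectorUnitary : Matrix n n ℂ) *
      Matrix.diagonal (fun i => (Real.log (hA.eigenvalues i) : ℂ)) *
      (star (hA.eigenvectorUnitary : Matrix n n ℂ)) := by
  rw [mlog, matfun, dif_pos hA]

lemma relEnt_symm_sum (σ ρ : Matrix n n ℂ) :
    relEnt σ ρ + relEnt ρ σ = (((σ - ρ) * (mlog σ - mlog ρ)).trace).re := by
  simp only [relEnt, Matrix.sub_mul, Matrix.mul_sub, Matrix.trace_sub, Complex.sub_re]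
  ring

lemma posDef_smul {A : Matrix n n ℂ} (hA : A.PosDef) {a : ℝ} (ha : 0 < a) :
    ((a : ℂ) • A).PosDef := by
  rw [Matrix.posDef_iff_dotProduct_mulVec]
  constructor
  · unfold Matrix.IsHermitian
    rw [Matrix.conjTranspose_smul, hA.1.eq]
    congr 1
    simp
  · intro x hx
    rw [Matrix.smul_mulVec, dotProduct_smul]
    have := (Matrix.posDef_iff_dotProduct_mulVec.mp hA).2 hx
    rw [smul_eq_mul]
    exact mul_pos (Complex.zero_lt_real.mpr ha) this

lemma posSemidef_smul {A : Matrix n n ℂ} (hA : A.PosSemidef) {a : ℝ} (ha : 0 ≤ a) :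
    ((a : ℂ) • A).PosSemidef := by
  rw [Matrix.posSemidef_iff_dotProduct_mulVec]
  constructor
  · unfold Matrix.IsHermitian
    rw [Matrix.conjTranspose_smul, hA.1.eq]
    congr 1
    simp
  · intro x
    rw [Matrix.smul_mulVec, dotProduct_smul]
    have := (Matrix.posSemidef_iff_dotProduct_mulVec.mp hA).2 x
    rw [smul_eq_mul]
    exact mul_nonneg (Complex.zero_le_real.mpr ha) this

end Aux


theorem interpolation_telescope {r k : ℕ} (hk : 0 < k)
    (ρ0 ρ' : Matrix (Fin r) (Fin r) ℂ)
    (h0 : IsState ρ0) (h0full : ρ0.PosDef)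
    (h1 : IsState ρ') (h1full : ρ'.PosDef) :
    let ρ : ℕ → Matrix (Fin r) (Fin r) ℂ := fun i =>
      (((1 - (i : ℝ) / k : ℝ)) : ℂ) • ρ0 + ((((i : ℝ) / k : ℝ)) : ℂ) • ρ'
    (∑ i ∈ Finset.range k, (relEnt (ρ i) (ρ (i + 1)) + relEnt (ρ (i + 1)) (ρ i))
        = (1 / k : ℝ) * (relEnt ρ0 ρ' + relEnt ρ' ρ0)) ∧
      ∑ i ∈ Finset.range k, relEnt (ρ i) (ρ (i + 1)) ≤
        (1 / k : ℝ) * (relEnt ρ0 ρ' + relEnt ρ' ρ0) := by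
  intro ρ
  have hkR : (0:ℝ) < (k:ℝ) := by exact_mod_cast hk
  have hρ0 : ρ 0 = ρ0 := by
    simp [ρ]
  have hρk : ρ k = ρ' := by
    simp only [ρ]
    rw [div_self hkR.ne']
    norm_num
  have hstate : ∀ i, i ≤ k → (ρ i).PosDef ∧ (ρ i).trace = 1 := by
    intro i hi
    have hbnn : (0:ℝ) ≤ (i:ℝ)/k := div_nonneg (Nat.cast_nonneg i) hkR.le
    have hble : (i:ℝ)/k ≤ 1 := by
      rw [div_le_one hkR]
      exact_mod_cast hi
    constructor
    · rcases lt_or_eq_of_le hble with hb1 | hb1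
      · have ha : (0:ℝ) < 1 - (i:ℝ)/k := by linarith
        exact (posDef_smul h0full ha).add_posSemidef (posSemidef_smul h1.1 hbnn)
      · have hik : i = k := by
          field_simp at hb1
          exact_mod_cast hb1
        rw [hik, hρk]
        exact h1full
    · show ((((1 - (i:ℝ)/k : ℝ)) : ℂ) • ρ0 + ((((i:ℝ)/k : ℝ)) : ℂ) • ρ').trace = 1
      rw [Matrix.trace_add, Matrix.trace_smul, Matrix.trace_smul, h0.2, h1.2,
        smul_eq_mul, smul_eq_mul, mul_one, mul_one]
      push_cast
      ring
  have hdiff : ∀ i : ℕ, ρ i - ρ (i+1) = ((1/k : ℝ) : ℂ) • (ρ0 - ρ') := by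
    intro i
    show (((1 - (i:ℝ)/k : ℝ)) : ℂ) • ρ0 + ((((i:ℝ)/k : ℝ)) : ℂ) • ρ'
        - ((((1 - ((i:ℕ)+1:ℕ)/k : ℝ)) : ℂ) • ρ0 + (((((i:ℕ)+1:ℕ):ℝ)/k : ℝ) : ℂ) • ρ')
        = ((1/k : ℝ) : ℂ) • (ρ0 - ρ')
    rw [smul_sub]
    match_scalars <;> push_cast <;> field_simp <;> ring
  set L : ℕ → Matrix (Fin r) (Fin r) ℂ := fun i => mlog (ρ i) with hL
  have main : ∑ i ∈ Finset.range k, (relEnt (ρ i) (ρ (i + 1)) + relEnt (ρ (i + 1)) (ρ i))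
      = (1 / k : ℝ) * (relEnt ρ0 ρ' + relEnt ρ' ρ0) := by
    have term : ∀ i : ℕ, relEnt (ρ i) (ρ (i + 1)) + relEnt (ρ (i + 1)) (ρ i)
        = (1/k : ℝ) * ((((ρ0 - ρ') * L i).trace).re - (((ρ0 - ρ') * L (i+1)).trace).re) := by
      intro i
      rw [relEnt_symm_sum, hdiff i, Matrix.smul_mul, Matrix.trace_smul]
      rw [smul_eq_mul, Complex.re_ofReal_mul]
      rw [Matrix.mul_sub, Matrix.trace_sub, Complex.sub_re]
    calc ∑ i ∈ Finset.range k, (relEnt (ρ i) (ρ (i + 1)) + relEnt (ρ (i + 1)) (ρ i))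
        = ∑ i ∈ Finset.range k,
            (1/k : ℝ) * ((((ρ0 - ρ') * L i).trace).re - (((ρ0 - ρ') * L (i+1)).trace).re) := by
          exact Finset.sum_congr rfl fun i _ => term i
      _ = (1/k : ℝ) * ∑ i ∈ Finset.range k,
            ((((ρ0 - ρ') * L i).trace).re - (((ρ0 - ρ') * L (i+1)).trace).re) := by
          rw [Finset.mul_sum]
      _ = (1/k : ℝ) * ((((ρ0 - ρ') * L 0).trace).re - (((ρ0 - ρ') * L k).trace).re) := by
          rw [Finset.sum_range_sub' (fun i => (((ρ0 - ρ') * L i).trace).re) k]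
      _ = (1 / k : ℝ) * (relEnt ρ0 ρ' + relEnt ρ' ρ0) := by
          congr 1
          rw [relEnt_symm_sum]
          simp only [hL, hρ0, hρk]
          rw [Matrix.mul_sub, Matrix.trace_sub, Complex.sub_re]
  refine ⟨main, ?_⟩
  rw [← main]
  refine Finset.sum_le_sum fun i hi => ?_
  have hik : i ≤ k := (Finset.mem_range.mp hi).le
  have hik' : i + 1 ≤ k := Finset.mem_range.mp hi
  have h2 := hstate (i+1) hik'
  have h3 := hstate i hik
  have := klein h2.1 h3.1 h2.2 h3.2
  linarith
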